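/- Let L be a vertically indecomposable levellised n-lattice, m ≥ 1, and A_n,…,A_{n+m−1} ⊆ L \ {0} satisfying the conditions making L̃ = L_{A_n,…,A_{n+m−1}} a levellised lattice. Then L̃ is vertically decomposable if and only if m = 1 and ↑A_n = L \ {0}. -/
import Mathlib


namespace PaperLattice

variable {N : ℕ}

/-- Depth: one less than the maximum length of a chain from `t` down to `a` w.r.t. `le`. -/
noncomputable def dep (le : Fin N → Fin N → Prop) (t a : Fin N) : ℕ :=
  sSup {k | ∃ l : List (Fin N), List.Chain' (fun x y => le y x ∧ y ≠ x) l ∧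
    l.head? = some t ∧ l.getLast? = some a ∧ l.length = k + 1}

/-- The `d`-th level: elements of depth `d`. -/
noncomputable def lev (le : Fin N → Fin N → Prop) (t : Fin N) (d : ℕ) : Set (Fin N) :=
  {a | dep le t a = d}

/-- A labelled poset is levellised if depth is monotone in the nonzero labels. -/
def Levellised (le : Fin N → Fin N → Prop) (t : Fin N) : Prop :=
  ∀ i j : Fin N, 0 < (i : ℕ) → (i : ℕ) ≤ (j : ℕ) → dep le t i ≤ dep le t j

def lt' (le : Fin N → Fin N → Prop) (a b : Fin N) : Prop := le a b ∧ a ≠ b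

/-- `b` covers `a`. -/
def CovByRel (le : Fin N → Fin N → Prop) (a b : Fin N) : Prop :=
  lt' le a b ∧ ∀ x, lt' le a x → lt' le x b → False

/-- The covering set of `a`. -/
def cov (le : Fin N → Fin N → Prop) (a : Fin N) : Set (Fin N) := {b | CovByRel le a b}

/-- The up-set of `A`. -/
def upset (le : Fin N → Fin N → Prop) (A : Set (Fin N)) : Set (Fin N) :=
  {x | ∃ a ∈ A, le a x}

def AntichainRel (le : Fin N → Fin N → Prop) (A : Set (Fin N)) : Prop :=
  ∀ a ∈ A, ∀ b ∈ A, a ≠ b → ¬ le a b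

/-- Binary weight of a set of labels. -/
noncomputable def wt (A : Set (Fin N)) : ℕ :=
  ∑ j : Fin N, A.indicator (fun j => 2 ^ (j : ℕ)) j

/-- `z` is a bottom and `o` a top for `le`. -/
def Bounds (le : Fin N → Fin N → Prop) (z o : Fin N) : Prop :=
  (∀ a, le z a) ∧ (∀ a, le a o)

/-- The order obtained from `le` by adding `m` new atoms, the `i`-th having covering set `A i`. -/
def extLe {n m : ℕ} (le : Fin n → Fin n → Prop) (A : Fin m → Set (Fin n)) :
    Fin (n + m) → Fin (n + m) → Prop := fun x y =>
  if hx : (x : ℕ) < n then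
    if hy : (y : ℕ) < n then le ⟨x, hx⟩ ⟨y, hy⟩
    else (x : ℕ) = 0
  else
    if hy : (y : ℕ) < n then
      (⟨y, hy⟩ : Fin n) ∈ upset le (A ⟨(x : ℕ) - n, by have := x.isLt; omega⟩)
    else x = y

/-- The relabelled order `π(L)`. -/
def permLe {n : ℕ} (π : Equiv.Perm (Fin n)) (le : Fin n → Fin n → Prop) :
    Fin n → Fin n → Prop := fun a b => le (π.symm a) (π.symm b)


/-- `A` is a lattice-antichain for `L` (with bottom `z`). -/
def IsLatticeAntichain {n : ℕ} (L : Lattice (Fin n)) (z : Fin n) (A : Set (Fin n)) : Prop :=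
  A.Nonempty ∧ (∀ a ∈ A, a ≠ z) ∧ AntichainRel L.le A ∧
    ∀ a ∈ upset L.le A, ∀ b ∈ upset L.le A,
      L.inf a b = z ∨ L.inf a b ∈ upset L.le A

/-- Vertical decomposability: some element other than the bottom `z` and top `o` is
comparable to every element. -/
def VertDecomp {N : ℕ} (le : Fin N → Fin N → Prop) (z o : Fin N) : Prop :=
  ∃ i : Fin N, i ≠ z ∧ i ≠ o ∧ ∀ j, le i j ∨ le j i

theorem extLe_oo {n m : ℕ} (le : Fin n → Fin n → Prop) (A : Fin m → Set (Fin n))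
    {x y : Fin (n + m)} (hx : (x : ℕ) < n) (hy : (y : ℕ) < n) :
    extLe le A x y ↔ le ⟨x, hx⟩ ⟨y, hy⟩ := by
  simp [extLe, hx, hy]

theorem extLe_on {n m : ℕ} (le : Fin n → Fin n → Prop) (A : Fin m → Set (Fin n))
    {x y : Fin (n + m)} (hx : (x : ℕ) < n) (hy : ¬ (y : ℕ) < n) :
    extLe le A x y ↔ (x : ℕ) = 0 := by
  simp [extLe, hx, hy]

theorem extLe_no {n m : ℕ} (le : Fin n → Fin n → Prop) (A : Fin m → Set (Fin n))
    {x y : Fin (n + m)} (hx : ¬ (x : ℕ) < n) (hy : (y : ℕ) < n) :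
    extLe le A x y ↔
      (⟨y, hy⟩ : Fin n) ∈ upset le (A ⟨(x : ℕ) - n, by have := x.isLt; omega⟩) := by
  simp [extLe, hx, hy]

theorem extLe_nn {n m : ℕ} (le : Fin n → Fin n → Prop) (A : Fin m → Set (Fin n))
    {x y : Fin (n + m)} (hx : ¬ (x : ℕ) < n) (hy : ¬ (y : ℕ) < n) :
    extLe le A x y ↔ x = y := by
  simp [extLe, hx, hy]

/-- if `L` is vertically indecomposable, the extension is vertically
decomposable iff `m = 1` and `↑A_n = L \ {0}`. -/
theorem statement9 {n m : ℕ} (hn : 2 ≤ n) (hm : 1 ≤ m) (L : Lattice (Fin n))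
    (hb : Bounds L.le ⟨0, by omega⟩ ⟨1, by omega⟩)
    (hlev : Levellised L.le ⟨1, by omega⟩)
    (k : ℕ) (hk : dep L.le ⟨1, by omega⟩ ⟨n - 1, by omega⟩ = k)
    (A : Fin m → Set (Fin n))
    (hB1 : ∀ i : Fin m, (A i ∩ lev L.le ⟨1, by omega⟩ k).Nonempty)
    (hB2 : ∀ i : Fin m, IsLatticeAntichain L ⟨0, by omega⟩ (A i))
    (hB3 : ∀ i j : Fin m, i ≠ j → ∀ a b : Fin n,
      a ∈ upset L.le (A i) ∩ upset L.le (A j) →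
      b ∈ upset L.le (A i) ∩ upset L.le (A j) →
      L.inf a b ≠ ⟨0, by omega⟩)
    (hvind : ¬ VertDecomp L.le ⟨0, by omega⟩ ⟨1, by omega⟩) :
    VertDecomp (extLe L.le A) ⟨0, by omega⟩ ⟨1, by omega⟩ ↔
      (m = 1 ∧ ∀ i : Fin m, upset L.le (A i) = {x : Fin n | x ≠ ⟨0, by omega⟩}) := by
  constructor
  · rintro ⟨i, hi0, hi1, hcomp⟩
    by_cases hin : (i : ℕ) < n
    · -- old witness would make L vertically decomposable
      exfalso
      apply hvind
      refine ⟨⟨(i : ℕ), hin⟩, ?_, ?_, ?_⟩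
      · intro h
        exact hi0 (Fin.ext (by simpa using congrArg Fin.val h))
      · intro h
        exact hi1 (Fin.ext (by simpa using congrArg Fin.val h))
      · intro j
        have hj : ((⟨(j : ℕ), by omega⟩ : Fin (n + m)) : ℕ) < n := j.isLt
        rcases hcomp ⟨(j : ℕ), by omega⟩ with h | h
        · rw [extLe_oo L.le A hin hj] at h
          left
          convert h using 2 <;> exact Fin.ext rfl
        · rw [extLe_oo L.le A hj hin] at h
          right
          convert h using 2 <;> exact Fin.ext rfl
    · -- the witness is a new atom
      have hm1 : m = 1 := by
        by_contra hm2
        have h2 : 2 ≤ m := by omega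
        obtain ⟨t, ht1, ht2, ht3⟩ : ∃ t, n ≤ t ∧ t < n + m ∧ t ≠ (i : ℕ) := by
          rcases eq_or_ne (i : ℕ) n with h | h
          · exact ⟨n + 1, by omega, by omega, by omega⟩
          · exact ⟨n, le_refl n, by omega, fun hh => h hh.symm⟩
        have hnt : ¬ ((⟨t, ht2⟩ : Fin (n + m)) : ℕ) < n := by simp; omega
        rcases hcomp ⟨t, ht2⟩ with h | h
        · rw [extLe_nn L.le A hin hnt] at h
          exact ht3 (congrArg Fin.val h).symm
        · rw [extLe_nn L.le A hnt hin] at h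
          exact ht3 (congrArg Fin.val h)
      refine ⟨hm1, fun i' => ?_⟩
      have hi' : i' = ⟨(i : ℕ) - n, by have := i.isLt; omega⟩ := by
        apply Fin.ext
        have := i'.isLt
        omega
      subst hi'
      ext x
      constructor
      · rintro ⟨a, ha, hax⟩
        intro hx0
        have hx0' : x = (⟨0, by omega⟩ : Fin n) := hx0
        have h0a : L.le (⟨0, by omega⟩ : Fin n) a := hb.1 a
        have ha0 : L.le a (⟨0, by omega⟩ : Fin n) := hx0' ▸ hax
        have : a = (⟨0, by omega⟩ : Fin n) := L.le_antisymm a _ ha0 h0a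
        exact (hB2 _).2.1 a ha this
      · intro hx
        have hxv : (x : ℕ) ≠ 0 := fun h => hx (Fin.ext h)
        have hjx : ((⟨(x : ℕ), by omega⟩ : Fin (n + m)) : ℕ) < n := x.isLt
        rcases hcomp ⟨(x : ℕ), by omega⟩ with h | h
        · rw [extLe_no L.le A hin hjx] at h
          convert h using 2 <;> exact Fin.ext rfl
        · rw [extLe_on L.le A hjx hin] at h
          exact absurd h hxv
  · rintro ⟨hm1, hup⟩
    refine ⟨⟨n, by omega⟩, ?_, ?_, ?_⟩
    · intro h
      have := congrArg Fin.val h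
      simp at this
      omega
    · intro h
      have := congrArg Fin.val h
      simp at this
      omega
    · intro j
      have hwn : ¬ ((⟨n, by omega⟩ : Fin (n + m)) : ℕ) < n := by simp
      by_cases hjn : (j : ℕ) < n
      · by_cases hj0 : (j : ℕ) = 0
        · right
          rw [extLe_on L.le A hjn hwn]
          exact hj0
        · left
          rw [extLe_no L.le A hwn hjn]
          have hset := hup ⟨((⟨n, by omega⟩ : Fin (n + m)) : ℕ) - n, by simp; omega⟩
          rw [hset]
          intro h
          exact hj0 (congrArg Fin.val h)
      · left
        rw [extLe_nn L.le A hwn hjn]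
        apply Fin.ext
        have := j.isLt
        simp
        omega

end PaperLattice
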